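/- Let p > 2 be a prime and s an integer with s ≡ 1 (mod p). Define e_s(0) = 0 and e_s(k) = Σ_{i=0}^{k−1} s^i for k > 0. Then for every n ∈ ℕ, the set { e_s(0), e_s(1), …, e_s(pⁿ−1) } is a complete set of representatives of the residue classes modulo pⁿ; equivalently, for all integers k, h ≥ 0, e_s(k) ≡ e_s(h) (mod pⁿ) if and only if k ≡ h (mod pⁿ). -/

import Mathlib

/- Formalization of results from "Hopf-Galois structures on extensions of degree p²q and
skew braces of order p²q: the cyclic Sylow p-subgroup case" (Campedel, Caranti, Del Corso).

Conventions: the paper composes permutations/automorphisms left-to-right and writes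
`x^α` for the action; in Mathlib composition is right-to-left, so the paper's product
`αβ` is rendered as `β * α`, the paper's `x^α` as `α x`, and the paper's conjugate
`α^β = β⁻¹αβ` as `β * α * β⁻¹`. -/

namespace HGS

universe u v

private theorem key {p : ℕ} (hp : p.Prime) (hp2 : 2 < p) (s : ℤ) (hs : s ≡ 1 [ZMOD (p : ℤ)])
    (n m : ℕ) : ((p:ℤ)^n ∣ ∑ i ∈ Finset.range m, s ^ i) ↔ p^n ∣ m := by
  have hdvd : (p:ℤ) ∣ s - 1 := (Int.modEq_iff_dvd.mp hs.symm)
  by_cases h1 : s = 1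
  · subst h1
    simp only [one_pow, Finset.sum_const, Finset.card_range, nsmul_eq_mul, mul_one]
    rw [show ((p:ℤ)^n) = ((p^n : ℕ) : ℤ) by push_cast; ring, Int.natCast_dvd_natCast]
  · have hps : ¬ (p:ℤ) ∣ s := by
      intro h
      have : (p:ℤ) ∣ 1 := by
        have := dvd_sub h hdvd
        simpa using this
      exact hp.one_lt.ne' (by exact_mod_cast Int.eq_one_of_dvd_one (by positivity) this)
    have hlte := Int.emultiplicity_pow_sub_pow hp (hp.odd_of_ne_two (by omega)) hdvd hps m
    have hgeom : (∑ i ∈ Finset.range m, s ^ i) * (s - 1) = s ^ m - 1 := geom_sum_mul s m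
    have hmul : emultiplicity (p:ℤ) (s ^ m - 1^m) =
        emultiplicity (p:ℤ) (∑ i ∈ Finset.range m, s ^ i) + emultiplicity (p:ℤ) (s - 1) := by
      rw [one_pow, ← hgeom, emultiplicity_mul (Int.prime_iff_natAbs_prime.mpr (by simpa using hp))]
    have hfin : emultiplicity (p:ℤ) (s - 1) ≠ ⊤ := by
      rw [← finiteMultiplicity_iff_emultiplicity_ne_top]
      exact Int.finiteMultiplicity_iff.mpr ⟨by simpa using hp.ne_one, sub_ne_zero.mpr h1⟩
    have heq : emultiplicity (p:ℤ) (∑ i ∈ Finset.range m, s ^ i) = emultiplicity p m := by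
      have := hmul.symm.trans hlte
      rw [add_comm (emultiplicity (p:ℤ) (s-1))] at this
      exact WithTop.add_right_cancel hfin this
    rw [pow_dvd_iff_le_emultiplicity, heq, ← pow_dvd_iff_le_emultiplicity]

private theorem main_le {p : ℕ} (hp : p.Prime) (hp2 : 2 < p) (s : ℤ)
    (hs : s ≡ 1 [ZMOD (p : ℤ)]) (n k h : ℕ) (hkh : h ≤ k) :
    ((∑ i ∈ Finset.range k, s ^ i) ≡ (∑ i ∈ Finset.range h, s ^ i)
        [ZMOD ((p : ℤ) ^ n)]) ↔ k ≡ h [MOD p ^ n] := by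
  have hps : ¬ (p:ℤ) ∣ s := by
    intro hd
    have hdvd : (p:ℤ) ∣ s - 1 := (Int.modEq_iff_dvd.mp hs.symm)
    have : (p:ℤ) ∣ 1 := by simpa using dvd_sub hd hdvd
    exact hp.one_lt.ne' (by exact_mod_cast Int.eq_one_of_dvd_one (by positivity) this)
  have hsplit : (∑ i ∈ Finset.range k, s ^ i) - (∑ i ∈ Finset.range h, s ^ i)
      = s ^ h * ∑ i ∈ Finset.range (k - h), s ^ i := by
    rw [← Finset.sum_Ico_eq_sub _ hkh, Finset.sum_Ico_eq_sum_range, Finset.mul_sum]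
    exact Finset.sum_congr rfl fun i _ => by rw [pow_add]
  have hcop : IsCoprime ((p:ℤ)^n) (s^h) :=
    (((Int.prime_iff_natAbs_prime.mpr (by simpa using hp)).coprime_iff_not_dvd.mpr hps)).pow
  rw [show ((∑ i ∈ Finset.range k, s ^ i) ≡ (∑ i ∈ Finset.range h, s ^ i) [ZMOD ((p:ℤ)^n)]) ↔ _
      from ⟨Int.ModEq.symm, Int.ModEq.symm⟩, Int.modEq_iff_dvd, hsplit,
    show (k ≡ h [MOD p^n]) ↔ _ from ⟨Nat.ModEq.symm, Nat.ModEq.symm⟩, Nat.modEq_iff_dvd' hkh]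
  constructor
  · intro hd
    exact (key hp hp2 s hs n (k - h)).mp (hcop.dvd_of_dvd_mul_left hd)
  · intro hd
    exact Dvd.dvd.mul_left ((key hp hp2 s hs n (k - h)).mpr hd) _

/-- Lemma `lemma:arithmetic2` of the paper.  For `p > 2` prime and
`s ≡ 1 (mod p)`, the sums `e_s(k) = Σ_{i<k} sⁱ` for `0 ≤ k < pⁿ` form a complete set of
representatives modulo `pⁿ`; equivalently `e_s(k) ≡ e_s(h) (mod pⁿ) ↔ k ≡ h (mod pⁿ)`. -/
theorem geometric_sums_complete_residues
    {p : ℕ} (hp : p.Prime) (hp2 : 2 < p) (s : ℤ) (hs : s ≡ 1 [ZMOD (p : ℤ)]) :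
    ∀ n k h : ℕ,
      ((∑ i ∈ Finset.range k, s ^ i) ≡ (∑ i ∈ Finset.range h, s ^ i)
          [ZMOD ((p : ℤ) ^ n)]) ↔
        k ≡ h [MOD p ^ n] := by
  intro n k h
  rcases le_total h k with hkh | hkh
  · exact main_le hp hp2 s hs n k h hkh
  · constructor
    · intro hm; exact ((main_le hp hp2 s hs n h k hkh).mp hm.symm).symm
    · intro hm; exact ((main_le hp hp2 s hs n h k hkh).mpr hm.symm).symm
end HGS
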